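/- Let N be a normal network on X, and let a and b be distinct elements of X such that {a, b} is either a cherry or a reticulated cherry of N in which b is the reticulation leaf. Let N' be the normal network obtained from N by deleting b. If R and Q are the sets of triples and quads displayed by N, respectively, then the set of triples displayed by N' is {xy|z ∈ R : b ∉ {x, y, z}} and the set of quads displayed by N' is {(w, x, y, z) ∈ Q : b ∉ {w, x, y, z}}. -/

import Mathlib

/-- A (raw) phylogenetic network structure: a vertex type, an arc relation
(arcs are directed; since `arc` is a relation there are no parallel arcs),
and a labelling of the (potential) leaves by elements of `α`. -/
structure PhyloNet (α : Type) : Type 1 where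
  V : Type
  arc : V → V → Prop
  leafMap : α → V

namespace PhyloNet

variable {α : Type}

/-- In-degree of a vertex. -/
noncomputable def inDeg (N : PhyloNet α) (v : N.V) : ℕ := {u : N.V | N.arc u v}.ncard

/-- Out-degree of a vertex. -/
noncomputable def outDeg (N : PhyloNet α) (v : N.V) : ℕ := {u : N.V | N.arc v u}.ncard

/-- A leaf is a vertex of out-degree zero. -/
def IsLeaf (N : PhyloNet α) (v : N.V) : Prop := N.outDeg v = 0

/-- A reticulation is a vertex of in-degree two. -/
def IsRet (N : PhyloNet α) (v : N.V) : Prop := N.inDeg v = 2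

/-- A tree vertex has in-degree one and out-degree two. -/
def IsTreeVert (N : PhyloNet α) (v : N.V) : Prop := N.inDeg v = 1 ∧ N.outDeg v = 2

/-- A root: in-degree zero and every vertex is reachable from it. -/
def IsRoot (N : PhyloNet α) (r : N.V) : Prop :=
  N.inDeg r = 0 ∧ ∀ v : N.V, Relation.ReflTransGen N.arc r v

/-- `N` is a rooted binary phylogenetic network on the (nonempty, finite) leaf set `X`. -/
structure IsNetworkOn (N : PhyloNet α) (X : Finset α) : Prop where
  nonemptyX : X.Nonempty
  finiteV : Finite N.V
  acyclic : ∀ v : N.V, ¬ Relation.TransGen N.arc v v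
  rooted : ∃ r : N.V, N.IsRoot r
  leaf_isLeaf : ∀ x ∈ X, N.IsLeaf (N.leafMap x)
  leaf_inj : ∀ x ∈ X, ∀ y ∈ X, N.leafMap x = N.leafMap y → x = y
  leaf_surj : ∀ v : N.V, N.IsLeaf v → ∃ x ∈ X, N.leafMap x = v
  degrees : (X.card = 1 ∧ Subsingleton N.V) ∨
    (∀ v : N.V,
      (N.inDeg v = 0 ∧ N.outDeg v = 2) ∨ (N.inDeg v = 1 ∧ N.outDeg v = 0) ∨
      (N.inDeg v = 1 ∧ N.outDeg v = 2) ∨ (N.inDeg v = 2 ∧ N.outDeg v = 1))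

/-- A phylogenetic tree is a phylogenetic network with no reticulations. -/
def IsTree (N : PhyloNet α) : Prop := ∀ v : N.V, ¬ N.IsRet v

/-- Tree-child: every non-leaf vertex has a child that is not a reticulation
(i.e. a child that is a tree vertex or a leaf). -/
def TreeChild (N : PhyloNet α) : Prop :=
  ∀ v : N.V, ¬ N.IsLeaf v → ∃ w : N.V, N.arc v w ∧ ¬ N.IsRet w

/-- A shortcut: a reticulation arc `(u, v)` such that there is a directed path
from `u` to `v` avoiding the arc `(u, v)`. -/
def Shortcut (N : PhyloNet α) (u v : N.V) : Prop :=
  N.arc u v ∧ N.IsRet v ∧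
    Relation.TransGen (fun p q => N.arc p q ∧ ¬(p = u ∧ q = v)) u v

/-- Normal: tree-child with no shortcuts. -/
def Normal (N : PhyloNet α) : Prop := N.TreeChild ∧ ∀ u v : N.V, ¬ N.Shortcut u v

/-- Temporal: there is a time map, with positive values, that is constant on
reticulation arcs and strictly increasing on tree arcs. -/
def Temporal (N : PhyloNet α) : Prop :=
  ∃ t : N.V → ℝ, (∀ v : N.V, 0 < t v) ∧
    ∀ u v : N.V, N.arc u v → ((N.IsRet v → t u = t v) ∧ (¬ N.IsRet v → t u < t v))

/-- A system of directed paths in `N` with prescribed endpoints, pairwise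
internally vertex-disjoint (two different paths meet only in common endpoints). -/
def PathSys (N : PhyloNet α) (es : List (N.V × N.V)) : Prop :=
  ∃ P : N.V × N.V → List N.V,
    (∀ e ∈ es, (P e).Chain' N.arc ∧ (P e).head? = some e.1 ∧ (P e).getLast? = some e.2) ∧
    (∀ e ∈ es, ∀ e' ∈ es, e ≠ e' → ∀ w ∈ P e, w ∈ P e' →
      (w = e.1 ∨ w = e.2) ∧ (w = e'.1 ∨ w = e'.2))

/-- `N` displays the triple `xy|z`: a subdivision of the caterpillar `(x, y, z)`
is a subgraph of `N`. -/
def DisplaysTriple (N : PhyloNet α) (X : Finset α) (x y z : α) : Prop :=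
  x ∈ X ∧ y ∈ X ∧ z ∈ X ∧ x ≠ y ∧ x ≠ z ∧ y ≠ z ∧
  ∃ r v : N.V, ([r, v, N.leafMap x, N.leafMap y, N.leafMap z]).Pairwise (· ≠ ·) ∧
    N.PathSys [(r, v), (v, N.leafMap x), (v, N.leafMap y), (r, N.leafMap z)]

/-- `N` displays the quad (caterpillar) `(x₁, x₂, x₃, x₄)`: a subdivision of the
caterpillar on four leaves is a subgraph of `N`. -/
def DisplaysQuad (N : PhyloNet α) (X : Finset α) (x₁ x₂ x₃ x₄ : α) : Prop :=
  x₁ ∈ X ∧ x₂ ∈ X ∧ x₃ ∈ X ∧ x₄ ∈ X ∧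
  x₁ ≠ x₂ ∧ x₁ ≠ x₃ ∧ x₁ ≠ x₄ ∧ x₂ ≠ x₃ ∧ x₂ ≠ x₄ ∧ x₃ ≠ x₄ ∧
  ∃ r q p : N.V,
    ([r, q, p, N.leafMap x₁, N.leafMap x₂, N.leafMap x₃, N.leafMap x₄]).Pairwise (· ≠ ·) ∧
    N.PathSys [(r, q), (q, p), (p, N.leafMap x₁), (p, N.leafMap x₂),
               (q, N.leafMap x₃), (r, N.leafMap x₄)]

/-- `N` displays the phylogenetic tree `T` with leaf set `X'`: a subdivision of
`T` is a subgraph of `N`, with the leaves labelled consistently. -/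
def Displays (N T : PhyloNet α) (X' : Finset α) : Prop :=
  ∃ (f : T.V → N.V) (P : T.V → T.V → List N.V),
    Function.Injective f ∧
    (∀ x ∈ X', f (T.leafMap x) = N.leafMap x) ∧
    (∀ u v : T.V, T.arc u v →
      (P u v).Chain' N.arc ∧ (P u v).head? = some (f u) ∧ (P u v).getLast? = some (f v)) ∧
    (∀ u v u' v' : T.V, T.arc u v → T.arc u' v' → (u, v) ≠ (u', v') →
      ∀ w : N.V, w ∈ P u v → w ∈ P u' v' →
        (w = f u ∨ w = f v) ∧ (w = f u' ∨ w = f v')) ∧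
    (∀ u v w : T.V, T.arc u v → f w ∈ P u v → w = u ∨ w = v)

/-- Isomorphism of two phylogenetic networks on `X`: an arc-preserving bijection
of the vertex sets fixing every leaf label in `X`. -/
def Isom (N N' : PhyloNet α) (X : Finset α) : Prop :=
  ∃ φ : N.V ≃ N'.V, (∀ x ∈ X, φ (N.leafMap x) = N'.leafMap x) ∧
    ∀ u v : N.V, N.arc u v ↔ N'.arc (φ u) (φ v)

/-- `{a, b}` is a cherry: the leaves `a` and `b` have the same parent. -/
def Cherry (N : PhyloNet α) (a b : α) : Prop :=
  a ≠ b ∧ ∃ p : N.V, N.arc p (N.leafMap a) ∧ N.arc p (N.leafMap b)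

/-- `{a, b}` is a reticulated cherry with reticulation leaf `b`:
the parent of `b` is a reticulation and there is an arc from the parent of `a`
to the parent of `b`. -/
def RetCherry (N : PhyloNet α) (a b : α) : Prop :=
  a ≠ b ∧ ∃ pa pb : N.V, N.arc pa (N.leafMap a) ∧ N.arc pb (N.leafMap b) ∧
    N.IsRet pb ∧ N.arc pa pb

/-- `{a, b, c}` is a double-reticulated cherry with reticulation leaf `b`. -/
def DoubleRetCherry (N : PhyloNet α) (a b c : α) : Prop :=
  a ≠ b ∧ b ≠ c ∧ a ≠ c ∧
  ∃ pa pb pc : N.V, N.arc pa (N.leafMap a) ∧ N.arc pb (N.leafMap b) ∧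
    N.arc pc (N.leafMap c) ∧ N.IsRet pb ∧ N.arc pa pb ∧ N.arc pc pb

/-- There is a directed path from `a` to `b` that avoids the vertex `u` entirely. -/
def AvoidReach (N : PhyloNet α) (u a b : N.V) : Prop :=
  a ≠ u ∧ b ≠ u ∧ Relation.ReflTransGen (fun p q => N.arc p q ∧ p ≠ u ∧ q ≠ u) a b

/-- The visibility set of a vertex `u`: the leaves `x ∈ X` such that every
directed path from the root to `x` traverses `u`. -/
def visSet (N : PhyloNet α) (X : Finset α) (u : N.V) : Set α :=
  {x | x ∈ X ∧ ∀ r : N.V, N.IsRoot r → ¬ N.AvoidReach u r (N.leafMap x)}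

/-- The cluster set of a vertex `u`: the leaves `x ∈ X` reachable from `u`. -/
def clusterSet (N : PhyloNet α) (X : Finset α) (u : N.V) : Set α :=
  {x | x ∈ X ∧ Relation.ReflTransGen N.arc u (N.leafMap x)}

/-- A tree path from `u` to `v`: a directed path in which every vertex except
`v` (and possibly `u`) is a tree vertex. -/
def TreePathTo (N : PhyloNet α) (u v : N.V) : Prop :=
  ∃ l : List N.V, l.Chain' N.arc ∧ l.head? = some u ∧ l.getLast? = some v ∧
    ∀ w ∈ l, w ≠ u → w ≠ v → N.IsTreeVert w

/-- A candidate set for `b` (relative to `a`). -/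
def CandidateSet (N : PhyloNet α) (X : Finset α) (a b : α) (W : Set α) : Prop :=
  W.Nonempty ∧ W ⊆ (↑X : Set α) \ {a, b} ∧
  (∀ c ∈ W, ∀ x ∈ X, x ∉ W → x ≠ b →
    N.DisplaysTriple X b c x ∧ ¬ N.DisplaysTriple X a c b) ∧
  (∀ c ∈ W, ∀ c' ∈ W, c ≠ c' → ¬ N.DisplaysTriple X b c c') ∧
  (∀ c ∈ W, ∀ x ∈ X, x ∉ W → x ≠ a → x ≠ b → ¬ N.DisplaysQuad X x b c a)

/-- `N'` is obtained from `N` by deleting the leaf `b` of the cherry `{a, b}`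
(with common parent `p`): delete `b` and its incident arc, and suppress `p`. -/
def DelCherry (N N' : PhyloNet α) (X : Finset α) (a b : α) : Prop :=
  ∃ (p : N.V) (j : N'.V → N.V),
    N.arc p (N.leafMap a) ∧ N.arc p (N.leafMap b) ∧
    Function.Injective j ∧
    (∀ x ∈ X, x ≠ b → j (N'.leafMap x) = N.leafMap x) ∧
    (∀ v : N.V, v ≠ p → v ≠ N.leafMap b → ∃ w : N'.V, j w = v) ∧
    (∀ w : N'.V, j w ≠ p ∧ j w ≠ N.leafMap b) ∧
    (∀ u v : N'.V, N'.arc u v ↔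
      (N.arc (j u) (j v) ∨ (N.arc (j u) p ∧ N.arc p (j v))))

/-- `N'` is obtained from `N` by deleting the reticulation leaf `b` of the
reticulated cherry `{a, b}`: delete `b`, its parent `pb` and their incident
arcs, and suppress the parent `pa` of `a` and the other parent `gb` of `pb`. -/
def DelRetCherry (N N' : PhyloNet α) (X : Finset α) (a b : α) : Prop :=
  ∃ (pa pb gb : N.V) (j : N'.V → N.V),
    N.arc pa (N.leafMap a) ∧ N.arc pb (N.leafMap b) ∧ N.IsRet pb ∧
    N.arc pa pb ∧ N.arc gb pb ∧ gb ≠ pa ∧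
    Function.Injective j ∧
    (∀ x ∈ X, x ≠ b → j (N'.leafMap x) = N.leafMap x) ∧
    (∀ v : N.V, v ∉ ({pa, pb, gb, N.leafMap b} : Set N.V) → ∃ w : N'.V, j w = v) ∧
    (∀ w : N'.V, j w ∉ ({pa, pb, gb, N.leafMap b} : Set N.V)) ∧
    (∀ u v : N'.V, N'.arc u v ↔
      (N.arc (j u) (j v) ∨ (N.arc (j u) pa ∧ N.arc pa (j v)) ∨
       (N.arc (j u) gb ∧ N.arc gb (j v))))

/-- `N'` is obtained from `N` by deleting the reticulation leaf `b` of the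
double-reticulated cherry `{a, b, c}`: delete `b`, `pb` and their incident
arcs, and suppress `pa` and `pc`. -/
def DelDoubleRetCherry (N N' : PhyloNet α) (X : Finset α) (a b c : α) : Prop :=
  ∃ (pa pb pc : N.V) (j : N'.V → N.V),
    N.arc pa (N.leafMap a) ∧ N.arc pb (N.leafMap b) ∧ N.arc pc (N.leafMap c) ∧
    N.IsRet pb ∧ N.arc pa pb ∧ N.arc pc pb ∧
    Function.Injective j ∧
    (∀ x ∈ X, x ≠ b → j (N'.leafMap x) = N.leafMap x) ∧
    (∀ v : N.V, v ∉ ({pa, pb, pc, N.leafMap b} : Set N.V) → ∃ w : N'.V, j w = v) ∧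
    (∀ w : N'.V, j w ∉ ({pa, pb, pc, N.leafMap b} : Set N.V)) ∧
    (∀ u v : N'.V, N'.arc u v ↔
      (N.arc (j u) (j v) ∨ (N.arc (j u) pa ∧ N.arc pa (j v)) ∨
       (N.arc (j u) pc ∧ N.arc pc (j v))))

end PhyloNet
section ChainShims

theorem List.chain'_cons {β : Type*} {R : β → β → Prop} {x y : β} {l : List β} :
    List.Chain' R (x :: y :: l) ↔ R x y ∧ List.Chain' R (y :: l) := List.isChain_cons_cons
theorem List.chain'_cons' {β : Type*} {R : β → β → Prop} {x : β} {l : List β} :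
    List.Chain' R (x :: l) ↔ (∀ y ∈ l.head?, R x y) ∧ List.Chain' R l := List.isChain_cons
theorem List.chain'_map {β γ : Type*} {R : γ → γ → Prop} (f : β → γ) {l : List β} :
    List.Chain' R (l.map f) ↔ List.Chain' (fun a b : β => R (f a) (f b)) l := List.isChain_map f
@[simp] theorem List.chain'_nil {β : Type*} {R : β → β → Prop} : List.Chain' R [] := List.isChain_nil
@[simp] theorem List.chain'_singleton {β : Type*} {R : β → β → Prop} (a : β) :
    List.Chain' R [a] := List.isChain_singleton a

end ChainShims
section ListHelpers

variable {β : Type*} {R R' : β → β → Prop}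

lemma mem_of_getLast?' {l : List β} {x : β} (h : l.getLast? = some x) : x ∈ l := by
  have : x ∈ l.reverse.head? := by rw [List.head?_reverse]; simp [h]
  have := List.mem_of_mem_head? this
  simpa using this

lemma chain'_reach : ∀ {t : List β} {x : β}, List.Chain' R (x :: t) → ∀ y ∈ t,
    Relation.TransGen R x y := by
  intro t
  induction t with
  | nil => intro x _ y hy; simp at hy
  | cons z t ih =>
    intro x hc y hy
    rw [List.chain'_cons] at hc
    rcases List.mem_cons.1 hy with rfl | hy
    · exact Relation.TransGen.single hc.1
    · exact (Relation.TransGen.single hc.1).trans (ih hc.2 y hy)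

lemma chain'_last_closed {F : Set β} (hF : ∀ f ∈ F, ∀ v, R f v → v ∈ F) :
    ∀ {l : List β}, List.Chain' R l → ∀ w ∈ l, w ∈ F → ∀ z, l.getLast? = some z → z ∈ F := by
  intro l
  induction l with
  | nil => intro _ w hw; simp at hw
  | cons x t ih =>
    intro hc w hw hwF z hz
    cases t with
    | nil =>
      simp at hz hw; subst hz; subst hw; exact hwF
    | cons y t' =>
      rw [List.getLast?_cons_cons] at hz
      rw [List.chain'_cons] at hc
      rcases List.mem_cons.1 hw with rfl | hw
      · exact ih hc.2 y (by simp) (hF _ hwF _ hc.1) z hz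
      · exact ih hc.2 w hw hwF z hz

lemma second_elem {l : List β} {x z : β} (hc : l.Chain' R) (hh : l.head? = some x)
    (hl : l.getLast? = some z) (hxz : x ≠ z) : ∃ y ∈ l, R x y ∧ y ∈ l.tail := by
  cases l with
  | nil => simp at hh
  | cons a t =>
    simp at hh; subst hh
    cases t with
    | nil => simp at hl; exact absurd hl hxz
    | cons y t' =>
      rw [List.chain'_cons] at hc
      exact ⟨y, by simp, hc.1, by simp⟩

lemma zip_tail_mem : ∀ {l : List β} {u v : β}, (u, v) ∈ l.zip l.tail → u ∈ l ∧ v ∈ l.tail := by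
  intro l
  induction l with
  | nil => intro u v h; simp at h
  | cons x t ih =>
    intro u v h
    cases t with
    | nil => simp at h
    | cons y t' =>
      simp only [List.tail_cons] at h ⊢
      have h' : (u = x ∧ v = y) ∨ (u, v) ∈ (y :: t').zip t' := by
        simpa [List.zip_cons_cons] using h
      rcases h' with ⟨rfl, rfl⟩ | h2
      · exact ⟨by simp, by simp⟩
      · have h2' : (u, v) ∈ (y :: t').zip (y :: t').tail := by simpa using h2
        obtain ⟨h3, h4⟩ := ih h2'
        exact ⟨List.mem_cons_of_mem _ h3, by
          simpa using List.mem_cons_of_mem y (by simpa using h4)⟩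

lemma zip_tail_rel : ∀ {l : List β} {u v : β}, List.Chain' R l → (u, v) ∈ l.zip l.tail → R u v := by
  intro l
  induction l with
  | nil => intro u v _ h; simp at h
  | cons x t ih =>
    intro u v hc h
    cases t with
    | nil => simp at h
    | cons y t' =>
      rw [List.chain'_cons] at hc
      have h' : (u = x ∧ v = y) ∨ (u, v) ∈ (y :: t').zip t' := by
        simpa [List.zip_cons_cons] using h
      rcases h' with ⟨rfl, rfl⟩ | h2
      · exact hc.1
      · exact ih hc.2 (by simpa using h2)

lemma chain'_mem_strengthen {p : β → Prop} :
    ∀ {l : List β}, List.Chain' R l → (∀ x ∈ l, p x) →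
      List.Chain' (fun a b => R a b ∧ p a ∧ p b) l := by
  intro l
  induction l with
  | nil => intro _ _; simp
  | cons x t ih =>
    intro hc hp
    rw [List.chain'_cons'] at hc ⊢
    refine ⟨fun y hy => ⟨hc.1 y hy, hp x (by simp), hp y ?_⟩, ih hc.2 fun w hw => hp w (by simp [hw])⟩
    exact List.mem_cons_of_mem _ (List.mem_of_mem_head? hy)

lemma chain'_filter_contract (q : β → Bool)
    (h1 : ∀ u v, R u v → q u = false → q v = false → R' u v)
    (h2 : ∀ u s v, R u s → R s v → q s = true → q u = false → q v = false → R' u v)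
    (h3 : ∀ u v, R u v → ¬(q u = true ∧ q v = true)) :
    ∀ (l : List β), List.Chain' R l → List.Chain' R' (l.filter (fun x => !q x))
  | [] , _ => by simp
  | [x], _ => by cases hqx : q x <;> simp [List.filter, hqx]
  | x :: y :: t, hc => by
      rw [List.chain'_cons] at hc
      cases hqx : q x with
      | true =>
        have := chain'_filter_contract q h1 h2 h3 (y :: t) hc.2
        simpa [List.filter, hqx] using this
      | false =>
        cases hqy : q y with
        | false =>
          have hrest := chain'_filter_contract q h1 h2 h3 (y :: t) hc.2
          rw [show (x :: y :: t).filter (fun x => !q x) = x :: (y :: t).filter (fun x => !q x) by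
            simp [List.filter, hqx]]
          rw [List.chain'_cons']
          refine ⟨fun b hb => ?_, hrest⟩
          have : ((y :: t).filter (fun x => !q x)).head? = some y := by simp [List.filter, hqy]
          rw [this] at hb; simp at hb; subst hb
          exact h1 x y hc.1 hqx hqy
        | true =>
          cases t with
          | nil => simp [List.filter, hqx, hqy]
          | cons z t' =>
            rw [List.chain'_cons] at hc
            have hqz : q z = false := by
              cases hqz : q z
              · rfl
              · exact absurd ⟨hqy, hqz⟩ (h3 y z hc.2.1)
            have hrest := chain'_filter_contract q h1 h2 h3 (z :: t') hc.2.2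
            rw [show (x :: y :: z :: t').filter (fun x => !q x)
                = x :: (z :: t').filter (fun x => !q x) by simp [List.filter, hqx, hqy]]
            rw [List.chain'_cons']
            refine ⟨fun b hb => ?_, hrest⟩
            have : ((z :: t').filter (fun x => !q x)).head? = some z := by
              simp [List.filter, hqz]
            rw [this] at hb; simp at hb; subst hb
            exact h2 x y z hc.1 hc.2.1 hqy hqx hqz
termination_by l => l.length

lemma filter_head? (q : β → Bool) {l : List β} {x : β} (hh : l.head? = some x)
    (hx : q x = false) : (l.filter (fun w => !q w)).head? = some x := by
  cases l with
  | nil => simp at hh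
  | cons a t => simp at hh; subst hh; simp [List.filter, hx]

lemma filter_getLast? (q : β → Bool) {l : List β} {x : β} (hh : l.getLast? = some x)
    (hx : q x = false) : (l.filter (fun w => !q w)).getLast? = some x := by
  rw [← List.head?_reverse] at hh ⊢
  rw [← List.filter_reverse]
  exact filter_head? q hh hx

end ListHelpers
namespace PhyloNet

variable {α : Type} {N : PhyloNet α}

lemma arc_ne (hacyc : ∀ v : N.V, ¬ Relation.TransGen N.arc v v) {u v : N.V}
    (h : N.arc u v) : u ≠ v := by
  rintro rfl
  exact hacyc u (Relation.TransGen.single h)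

lemma not_arc_of_outDeg_zero (hfin : Finite N.V) {v : N.V} (h : N.outDeg v = 0) :
    ∀ w, ¬ N.arc v w := by
  intro w hw
  have h0 : {u : N.V | N.arc v u} = ∅ := by
    rw [← Set.ncard_eq_zero (Set.toFinite _)]; exact h
  have : w ∈ ({u : N.V | N.arc v u} : Set N.V) := hw
  rw [h0] at this
  simp at this

lemma out_le_one (hfin : Finite N.V) {v w1 w2 : N.V} (hd : N.outDeg v ≤ 1)
    (h1 : N.arc v w1) (h2 : N.arc v w2) : w1 = w2 := by
  by_contra hne
  have hsub : ({w1, w2} : Set N.V) ⊆ {u : N.V | N.arc v u} := by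
    rintro w (rfl | rfl) <;> simpa [h1, h2]
  have := Set.ncard_le_ncard hsub (Set.toFinite _)
  rw [Set.ncard_pair hne] at this
  simp only [outDeg, inDeg] at hd
  omega

lemma in_le_one (hfin : Finite N.V) {v u1 u2 : N.V} (hd : N.inDeg v ≤ 1)
    (h1 : N.arc u1 v) (h2 : N.arc u2 v) : u1 = u2 := by
  by_contra hne
  have hsub : ({u1, u2} : Set N.V) ⊆ {u : N.V | N.arc u v} := by
    rintro w (rfl | rfl) <;> simpa [h1, h2]
  have := Set.ncard_le_ncard hsub (Set.toFinite _)
  rw [Set.ncard_pair hne] at this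
  simp only [outDeg, inDeg] at hd
  omega

lemma two_le_out (hfin : Finite N.V) {v w1 w2 : N.V} (h1 : N.arc v w1) (h2 : N.arc v w2)
    (hne : w1 ≠ w2) : 2 ≤ N.outDeg v := by
  have hsub : ({w1, w2} : Set N.V) ⊆ {u : N.V | N.arc v u} := by
    rintro w (rfl | rfl) <;> simpa [h1, h2]
  have h2le := Set.ncard_le_ncard hsub (Set.toFinite _)
  rw [Set.ncard_pair hne] at h2le
  simpa only [outDeg, inDeg] using h2le

lemma two_le_in (hfin : Finite N.V) {v u1 u2 : N.V} (h1 : N.arc u1 v) (h2 : N.arc u2 v)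
    (hne : u1 ≠ u2) : 2 ≤ N.inDeg v := by
  have hsub : ({u1, u2} : Set N.V) ⊆ {u : N.V | N.arc u v} := by
    rintro w (rfl | rfl) <;> simpa [h1, h2]
  have h2le := Set.ncard_le_ncard hsub (Set.toFinite _)
  rw [Set.ncard_pair hne] at h2le
  simpa only [outDeg, inDeg] using h2le

lemma out_eq_pair (hfin : Finite N.V) {v w1 w2 : N.V} (hd : N.outDeg v = 2)
    (h1 : N.arc v w1) (h2 : N.arc v w2) (hne : w1 ≠ w2) :
    ∀ w, N.arc v w → w = w1 ∨ w = w2 := by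
  intro w hw
  obtain ⟨a, b, hab, hset⟩ := Set.ncard_eq_two.1 hd
  have m1 : w1 = a ∨ w1 = b := by have : w1 ∈ ({a, b} : Set N.V) := hset ▸ h1; simpa using this
  have m2 : w2 = a ∨ w2 = b := by have : w2 ∈ ({a, b} : Set N.V) := hset ▸ h2; simpa using this
  have mw : w = a ∨ w = b := by have : w ∈ ({a, b} : Set N.V) := hset ▸ hw; simpa using this
  rcases m1 with rfl | rfl <;> rcases m2 with rfl | rfl <;> tauto

lemma out_eq_single (hfin : Finite N.V) {v w1 : N.V} (hd : N.outDeg v = 1)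
    (h1 : N.arc v w1) : ∀ w, N.arc v w → w = w1 :=
  fun w hw => out_le_one hfin (le_of_eq hd) hw h1

lemma out_other (hfin : Finite N.V) {v w : N.V} (hd : N.outDeg v = 2) (h1 : N.arc v w) :
    ∃ c, c ≠ w ∧ N.arc v c ∧ ∀ u, N.arc v u → u = w ∨ u = c := by
  obtain ⟨a, b, hab, hset⟩ := Set.ncard_eq_two.1 hd
  have ha : N.arc v a := by
    have : a ∈ {u : N.V | N.arc v u} := by rw [hset]; simp
    exact this
  have hb : N.arc v b := by
    have : b ∈ {u : N.V | N.arc v u} := by rw [hset]; simp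
    exact this
  have mw : w = a ∨ w = b := by have : w ∈ ({a, b} : Set N.V) := hset ▸ h1; simpa using this
  have hmem : ∀ u, N.arc v u → u = a ∨ u = b := by
    intro u hu; have : u ∈ ({a, b} : Set N.V) := hset ▸ hu; simpa using this
  rcases mw with rfl | rfl
  · exact ⟨b, hab.symm, hb, fun u hu => hmem u hu⟩
  · exact ⟨a, hab, ha, fun u hu => (hmem u hu).symm⟩

/-- The degree disjunction holds for all vertices when `X` has two distinct leaves. -/
lemma degrees_all {X : Finset α} (hN : N.IsNetworkOn X) {a b : α} (ha : a ∈ X) (hb : b ∈ X)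
    (hab : a ≠ b) :
    ∀ v : N.V,
      (N.inDeg v = 0 ∧ N.outDeg v = 2) ∨ (N.inDeg v = 1 ∧ N.outDeg v = 0) ∨
      (N.inDeg v = 1 ∧ N.outDeg v = 2) ∨ (N.inDeg v = 2 ∧ N.outDeg v = 1) := by
  rcases hN.degrees with ⟨_, hsub⟩ | h
  · exact absurd (hN.leaf_inj a ha b hb (hsub.elim _ _)) hab
  · exact h

end PhyloNet
namespace PhyloNet

variable {α : Type} {N N' : PhyloNet α}

/-- Generic context for deleting a leaf: `j` embeds `N'` into `N`, `S` is the set of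
suppressed vertices, `F` a forbidden set closed under arcs. -/
structure DelCtx (N N' : PhyloNet α) where
  j : N'.V → N.V
  S : Set N.V
  F : Set N.V
  dflt : N'.V
  hinj : Function.Injective j
  himg : ∀ v : N.V, v ∉ S → v ∉ F → ∃ w, j w = v
  hnotS : ∀ w, j w ∉ S
  hnotF : ∀ w, j w ∉ F
  harc : ∀ u v, N'.arc u v ↔ (N.arc (j u) (j v) ∨ ∃ s ∈ S, N.arc (j u) s ∧ N.arc s (j v))
  hacyc : ∀ v : N.V, ¬ Relation.TransGen N.arc v v
  hFclosed : ∀ f ∈ F, ∀ v, N.arc f v → v ∈ F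
  hSout : ∀ s ∈ S, ∃ c, c ∉ S ∧ c ∉ F ∧ ∀ v, N.arc s v → v ∈ F ∨ v = c
  hSin : ∀ s ∈ S, ∀ u, N.arc u s → u ∉ S ∧ u ∉ F
  hUniq : ∀ s ∈ S, ∀ u v u' v', N.arc u s → N.arc s v → N.arc u' s → N.arc s v' →
      v ∉ S → v ∉ F → v' ∉ S → v' ∉ F → u = u' ∧ v = v'

namespace DelCtx

open Classical in
noncomputable def mid (c : DelCtx N N') (u v : N'.V) : List N.V :=
  if N.arc (c.j u) (c.j v) then []
  else if h : ∃ s, s ∈ c.S ∧ N.arc (c.j u) s ∧ N.arc s (c.j v) then [h.choose] else []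

lemma mid_mem (c : DelCtx N N') {u v : N'.V} {w : N.V} (hw : w ∈ c.mid u v) :
    w ∈ c.S ∧ N.arc (c.j u) w ∧ N.arc w (c.j v) := by
  unfold mid at hw
  split_ifs at hw with h1 h2
  · simp at hw
  · simp at hw; exact hw ▸ h2.choose_spec
  · simp at hw

lemma mid_spec (c : DelCtx N N') {u v : N'.V} (h : N'.arc u v) :
    (c.mid u v = [] ∧ N.arc (c.j u) (c.j v)) ∨
    (∃ s, c.mid u v = [s] ∧ s ∈ c.S ∧ N.arc (c.j u) s ∧ N.arc s (c.j v)) := by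
  unfold mid
  split_ifs with h1 h2
  · exact Or.inl ⟨rfl, h1⟩
  · exact Or.inr ⟨h2.choose, rfl, h2.choose_spec.1, h2.choose_spec.2.1, h2.choose_spec.2.2⟩
  · exfalso
    rcases (c.harc u v).1 h with ha | ⟨s, hs, h3, h4⟩
    · exact h1 ha
    · exact h2 ⟨s, hs, h3, h4⟩

noncomputable def liftL (c : DelCtx N N') : List N'.V → List N.V
  | [] => []
  | [u] => [c.j u]
  | u :: v :: t => c.j u :: (c.mid u v ++ liftL c (v :: t))

@[simp] lemma liftL_nil (c : DelCtx N N') : c.liftL [] = [] := by rw [liftL]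
@[simp] lemma liftL_single (c : DelCtx N N') (u : N'.V) : c.liftL [u] = [c.j u] := by rw [liftL]
lemma liftL_cons₂ (c : DelCtx N N') (u v : N'.V) (t : List N'.V) :
    c.liftL (u :: v :: t) = c.j u :: (c.mid u v ++ c.liftL (v :: t)) := by rw [liftL]

lemma liftL_ne_nil (c : DelCtx N N') : ∀ {l : List N'.V}, l ≠ [] → c.liftL l ≠ []
  | [], h => absurd rfl h
  | [u], _ => by simp
  | u :: v :: t, _ => by rw [liftL_cons₂]; simp

lemma liftL_head? (c : DelCtx N N') : ∀ (l : List N'.V), (c.liftL l).head? = l.head?.map c.j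
  | [] => by simp
  | [u] => by simp
  | u :: v :: t => by rw [liftL_cons₂]; simp

lemma liftL_getLast? (c : DelCtx N N') : ∀ (l : List N'.V), (c.liftL l).getLast? = l.getLast?.map c.j
  | [] => by simp
  | [u] => by simp
  | u :: v :: t => by
      rw [liftL_cons₂,
        show c.j u :: (c.mid u v ++ c.liftL (v :: t))
          = (c.j u :: c.mid u v) ++ c.liftL (v :: t) from rfl,
        List.getLast?_append, liftL_getLast? c (v :: t), List.getLast?_cons_cons]
      have : ∃ z, (v :: t).getLast? = some z :=
        ⟨(v :: t).getLast (by simp), List.getLast?_eq_getLast (by simp)⟩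
      obtain ⟨z, hz⟩ := this
      rw [hz]
      rfl

lemma liftL_chain (c : DelCtx N N') : ∀ {l : List N'.V}, List.Chain' N'.arc l → List.Chain' N.arc (c.liftL l)
  | [], _ => by simp
  | [u], _ => by simp
  | u :: v :: t, hc => by
      rw [List.chain'_cons] at hc
      rw [liftL_cons₂]
      rcases c.mid_spec hc.1 with ⟨hm, ha⟩ | ⟨s, hm, hs, h1, h2⟩
      · rw [hm, List.nil_append, List.chain'_cons']
        refine ⟨fun y hy => ?_, liftL_chain c hc.2⟩
        rw [liftL_head? c (v :: t)] at hy
        simp at hy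
        exact hy ▸ ha
      · rw [hm, List.singleton_append, List.chain'_cons, List.chain'_cons']
        refine ⟨h1, fun y hy => ?_, liftL_chain c hc.2⟩
        rw [liftL_head? c (v :: t)] at hy
        simp at hy
        exact hy ▸ h2

lemma liftL_mem (c : DelCtx N N') : ∀ {l : List N'.V} {w : N.V}, w ∈ c.liftL l →
    (∃ u ∈ l, w = c.j u) ∨ (∃ p ∈ l.zip l.tail, w ∈ c.mid p.1 p.2)
  | [], w, h => by simp at h
  | [u], w, h => by simp at h; exact Or.inl ⟨u, by simp, h⟩
  | u :: v :: t, w, h => by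
      rw [liftL_cons₂] at h
      rcases List.mem_cons.1 h with rfl | h
      · exact Or.inl ⟨u, by simp, rfl⟩
      rcases List.mem_append.1 h with h | h
      · exact Or.inr ⟨(u, v), by simp [List.zip_cons_cons], h⟩
      · rcases liftL_mem c h with ⟨u', hu', rfl⟩ | ⟨p, hp, hpm⟩
        · exact Or.inl ⟨u', List.mem_cons_of_mem _ hu', rfl⟩
        · refine Or.inr ⟨p, ?_, hpm⟩
          simp only [List.tail_cons] at hp ⊢
          rw [List.zip_cons_cons]
          exact List.mem_cons_of_mem _ (by simpa using hp)

open Classical in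
noncomputable def inv (c : DelCtx N N') (v : N.V) : N'.V :=
  if h : ∃ w, c.j w = v then h.choose else c.dflt

lemma inv_j (c : DelCtx N N') (w : N'.V) : c.inv (c.j w) = w := by
  unfold inv
  have h : ∃ w', c.j w' = c.j w := ⟨w, rfl⟩
  rw [dif_pos h]
  exact c.hinj h.choose_spec

lemma j_inv (c : DelCtx N N') {v : N.V} (h1 : v ∉ c.S) (h2 : v ∉ c.F) : c.j (c.inv v) = v := by
  unfold inv
  have h : ∃ w, c.j w = v := c.himg v h1 h2
  rw [dif_pos h]
  exact h.choose_spec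

lemma transGen_j (c : DelCtx N N') {x y : N'.V} (h : Relation.TransGen N'.arc x y) :
    Relation.TransGen N.arc (c.j x) (c.j y) := by
  induction h with
  | single h =>
      rcases (c.harc _ _).1 h with ha | ⟨s, _, h1, h2⟩
      · exact Relation.TransGen.single ha
      · exact (Relation.TransGen.single h1).tail h2
  | tail _ h2 ih =>
      rcases (c.harc _ _).1 h2 with ha | ⟨s, _, h1', h2'⟩
      · exact ih.tail ha
      · exact (ih.tail h1').tail h2'

lemma acyc' (c : DelCtx N N') : ∀ v : N'.V, ¬ Relation.TransGen N'.arc v v :=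
  fun v h => c.hacyc (c.j v) (c.transGen_j h)

lemma adj_endpoints (c : DelCtx N N') {l : List N'.V} {e : N'.V × N'.V}
    (hh : l.head? = some e.1) (hne : e.1 ≠ e.2)
    {u v : N'.V} (hadj : (u, v) ∈ l.zip l.tail)
    (hu : u = e.1 ∨ u = e.2) (hv : v = e.1 ∨ v = e.2) (huv : u ≠ v)
    (hch : List.Chain' N'.arc l) : u = e.1 ∧ v = e.2 := by
  have hvt : v ∈ l.tail := (zip_tail_mem hadj).2
  obtain ⟨x, t, rfl⟩ : ∃ x t, l = x :: t := by
    cases l with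
    | nil => simp at hh
    | cons x t => exact ⟨x, t, rfl⟩
  simp at hh
  subst hh
  have hreach : Relation.TransGen N'.arc e.1 v := chain'_reach hch v (by simpa using hvt)
  have hv2 : v = e.2 := by
    rcases hv with rfl | h
    · exact absurd hreach (c.acyc' _)
    · exact h
  refine ⟨?_, hv2⟩
  rcases hu with h | h
  · exact h
  · exact absurd (h.trans hv2.symm) huv

end DelCtx

end PhyloNet
namespace PhyloNet
namespace DelCtx

variable {α : Type} {N N' : PhyloNet α}

lemma pathSys_fwd (c : DelCtx N N') (es : List (N'.V × N'.V)) (hne : ∀ e ∈ es, e.1 ≠ e.2)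
    (h : N'.PathSys es) : N.PathSys (es.map fun e => (c.j e.1, c.j e.2)) := by
  classical
  obtain ⟨P, hP, hdisj⟩ := h
  refine ⟨fun f => if h : ∃ e, e ∈ es ∧ (c.j e.1, c.j e.2) = f then c.liftL (P h.choose) else [],
    ?_, ?_⟩
  · intro f hf
    obtain ⟨e, he, hef⟩ := List.mem_map.1 hf
    have hex : ∃ e', e' ∈ es ∧ (c.j e'.1, c.j e'.2) = f := ⟨e, he, hef⟩
    simp only [dif_pos hex]
    obtain ⟨he0m, he0f⟩ := hex.choose_spec
    obtain ⟨hch, hh, hl⟩ := hP _ he0m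
    refine ⟨liftL_chain c hch, ?_, ?_⟩
    · rw [liftL_head? c, hh]
      exact congrArg (fun y => some y.1) he0f
    · rw [liftL_getLast? c, hl]
      exact congrArg (fun y => some y.2) he0f
  · intro f hf f' hf' hff' w hw hw'
    obtain ⟨e, he, hef⟩ := List.mem_map.1 hf
    obtain ⟨e', he', hef'⟩ := List.mem_map.1 hf'
    have hex : ∃ e0, e0 ∈ es ∧ (c.j e0.1, c.j e0.2) = f := ⟨e, he, hef⟩
    have hex' : ∃ e0, e0 ∈ es ∧ (c.j e0.1, c.j e0.2) = f' := ⟨e', he', hef'⟩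
    simp only [dif_pos hex] at hw
    simp only [dif_pos hex'] at hw'
    obtain ⟨hm, hfeq⟩ := hex.choose_spec
    obtain ⟨hm', hfeq'⟩ := hex'.choose_spec
    set e0 := hex.choose with he0def
    set e0' := hex'.choose with he0'def
    have h00 : e0 ≠ e0' := fun h => hff' (by rw [← hfeq, ← hfeq', h])
    obtain ⟨hch, hh, hl⟩ := hP _ hm
    obtain ⟨hch', hh', hl'⟩ := hP _ hm'
    rcases liftL_mem c hw with ⟨u, hu, rfl⟩ | ⟨p, hp, hpm⟩
    · rcases liftL_mem c hw' with ⟨u', hu', hju⟩ | ⟨p', hp', hpm'⟩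
      · have huu : u = u' := c.hinj hju
        have hd := hdisj _ hm _ hm' h00 u hu (huu ▸ hu')
        constructor
        · rcases hd.1 with h | h
          · left; rw [h]; exact congrArg Prod.fst hfeq
          · right; rw [h]; exact congrArg Prod.snd hfeq
        · rcases hd.2 with h | h
          · left; rw [h]; exact congrArg Prod.fst hfeq'
          · right; rw [h]; exact congrArg Prod.snd hfeq'
      · exact absurd (c.mid_mem hpm').1 (c.hnotS u)
    · rcases liftL_mem c hw' with ⟨u', hu', rfl⟩ | ⟨p', hp', hpm'⟩
      · exact absurd (c.mid_mem hpm).1 (c.hnotS u')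
      · obtain ⟨hwS, ha1, ha2⟩ := c.mid_mem hpm
        obtain ⟨_, ha1', ha2'⟩ := c.mid_mem hpm'
        obtain ⟨hj1, hj2⟩ := c.hUniq w hwS _ _ _ _ ha1 ha2 ha1' ha2'
          (c.hnotS _) (c.hnotF _) (c.hnotS _) (c.hnotF _)
        have h1 : p.1 = p'.1 := c.hinj hj1
        have h2 : p.2 = p'.2 := c.hinj hj2
        have hpp' : p = p' := Prod.ext_iff.2 ⟨h1, h2⟩
        have hp1mem : p.1 ∈ P e0 := (zip_tail_mem hp).1
        have hp2mem : p.2 ∈ P e0 := List.mem_of_mem_tail (zip_tail_mem hp).2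
        have hp1mem' : p.1 ∈ P e0' := by
          rw [hpp']; exact (zip_tail_mem hp').1
        have hp2mem' : p.2 ∈ P e0' := by
          rw [hpp']; exact List.mem_of_mem_tail (zip_tail_mem hp').2
        have hd1 := hdisj _ hm _ hm' h00 p.1 hp1mem hp1mem'
        have hd2 := hdisj _ hm _ hm' h00 p.2 hp2mem hp2mem'
        have hne12 : p.1 ≠ p.2 := by
          intro hq
          apply c.hacyc (c.j p.1)
          refine (Relation.TransGen.single ha1).tail ?_
          rw [hq]
          exact ha2
        have hA := c.adj_endpoints hh (hne _ hm) hp hd1.1 hd2.1 hne12 hch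
        have hB := c.adj_endpoints hh' (hne _ hm') (hpp' ▸ hp') hd1.2 hd2.2 hne12 hch'
        exact absurd (Prod.ext_iff.2 ⟨hA.1.symm.trans hB.1, hA.2.symm.trans hB.2⟩ : e0 = e0') h00

lemma pathSys_back (c : DelCtx N N') (es : List (N.V × N.V)) (P : N.V × N.V → List N.V)
    (hP : ∀ e ∈ es, (P e).Chain' N.arc ∧ (P e).head? = some e.1 ∧ (P e).getLast? = some e.2)
    (hdisj : ∀ e ∈ es, ∀ e' ∈ es, e ≠ e' → ∀ w ∈ P e, w ∈ P e' →
      (w = e.1 ∨ w = e.2) ∧ (w = e'.1 ∨ w = e'.2))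
    (hnoF : ∀ e ∈ es, ∀ w ∈ P e, w ∉ c.F)
    (hendS : ∀ e ∈ es, e.1 ∉ c.S ∧ e.2 ∉ c.S) :
    N'.PathSys (es.map fun e => (c.inv e.1, c.inv e.2)) := by
  classical
  set q : N.V → Bool := fun v => decide (v ∈ c.S) with hq
  have hQ : ∀ v, q v = false ↔ v ∉ c.S := by intro v; simp [hq]
  set ctr : List N.V → List N'.V := fun l => (l.filter (fun w => !q w)).map c.inv with hctr
  refine ⟨fun f => if h : ∃ e, e ∈ es ∧ (c.inv e.1, c.inv e.2) = f then ctr (P h.choose)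
    else [], ?_, ?_⟩
  · intro f hf
    obtain ⟨e, he, hef⟩ := List.mem_map.1 hf
    have hex : ∃ e0, e0 ∈ es ∧ (c.inv e0.1, c.inv e0.2) = f := ⟨e, he, hef⟩
    simp only [dif_pos hex]
    obtain ⟨hm, hfeq⟩ := hex.choose_spec
    set e0 := hex.choose with he0def
    obtain ⟨hch, hh, hl⟩ := hP _ hm
    have hmemF : ∀ w ∈ P e0, w ∉ c.F := hnoF _ hm
    have hch2 : List.Chain' (fun a b => N.arc a b ∧ a ∉ c.F ∧ b ∉ c.F) (P e0) :=
      chain'_mem_strengthen hch hmemF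
    have hchR' : List.Chain' (fun a b => N'.arc (c.inv a) (c.inv b))
        ((P e0).filter (fun w => !q w)) := by
      refine chain'_filter_contract q ?_ ?_ ?_ _ hch2
      · rintro u v ⟨huv, huF, hvF⟩ hqu hqv
        exact (c.harc _ _).2 (Or.inl (by
          rw [c.j_inv ((hQ u).1 hqu) huF, c.j_inv ((hQ v).1 hqv) hvF]; exact huv))
      · rintro u s v ⟨hus, huF, hsF⟩ ⟨hsv, _, hvF⟩ hqs hqu hqv
        have hsS : s ∈ c.S := by simpa [hq] using hqs
        refine (c.harc _ _).2 (Or.inr ⟨s, hsS, ?_, ?_⟩)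
        · rw [c.j_inv ((hQ u).1 hqu) huF]; exact hus
        · rw [c.j_inv ((hQ v).1 hqv) hvF]; exact hsv
      · rintro u v ⟨huv, _, _⟩ ⟨hqu, hqv⟩
        have hvS : v ∈ c.S := by simpa [hq] using hqv
        have huS : u ∈ c.S := by simpa [hq] using hqu
        exact (c.hSin v hvS u huv).1 huS
    have hchain : List.Chain' N'.arc (ctr (P e0)) := by
      rw [hctr]
      exact (List.chain'_map _).2 hchR'
    refine ⟨hchain, ?_, ?_⟩
    · rw [hctr]
      have h1 : ((P e0).filter (fun w => !q w)).head? = some e0.1 :=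
        filter_head? q hh ((hQ _).2 (hendS _ hm).1)
      rw [List.head?_map, h1]
      exact congrArg (fun y => some y.1) hfeq
    · rw [hctr]
      have h1 : ((P e0).filter (fun w => !q w)).getLast? = some e0.2 :=
        filter_getLast? q hl ((hQ _).2 (hendS _ hm).2)
      rw [List.getLast?_map, h1]
      exact congrArg (fun y => some y.2) hfeq
  · intro f hf f' hf' hff' w hw hw'
    obtain ⟨e, he, hef⟩ := List.mem_map.1 hf
    obtain ⟨e', he', hef'⟩ := List.mem_map.1 hf'
    have hex : ∃ e0, e0 ∈ es ∧ (c.inv e0.1, c.inv e0.2) = f := ⟨e, he, hef⟩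
    have hex' : ∃ e0, e0 ∈ es ∧ (c.inv e0.1, c.inv e0.2) = f' := ⟨e', he', hef'⟩
    simp only [dif_pos hex] at hw
    simp only [dif_pos hex'] at hw'
    obtain ⟨hm, hfeq⟩ := hex.choose_spec
    obtain ⟨hm', hfeq'⟩ := hex'.choose_spec
    set e0 := hex.choose with he0def
    set e0' := hex'.choose with he0'def
    have h00 : e0 ≠ e0' := fun h => hff' (by rw [← hfeq, ← hfeq', h])
    rw [hctr] at hw hw'
    obtain ⟨u, hu, rfl⟩ := List.mem_map.1 hw
    obtain ⟨u', hu', huu⟩ := List.mem_map.1 hw'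
    rw [List.mem_filter] at hu hu'
    have huS : u ∉ c.S := by simpa [hq] using hu.2
    have huF : u ∉ c.F := hnoF _ hm u hu.1
    have hu'S : u' ∉ c.S := by simpa [hq] using hu'.2
    have hu'F : u' ∉ c.F := hnoF _ hm' u' hu'.1
    have huu' : u' = u := by
      have hju := congrArg c.j huu
      rwa [c.j_inv hu'S hu'F, c.j_inv huS huF] at hju
    have hd := hdisj _ hm _ hm' h00 u hu.1 (by rw [← huu']; exact hu'.1)
    constructor
    · rcases hd.1 with h | h
      · left; rw [h]; exact congrArg Prod.fst hfeq
      · right; rw [h]; exact congrArg Prod.snd hfeq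
    · rcases hd.2 with h | h
      · left; rw [h]; exact congrArg Prod.fst hfeq'
      · right; rw [h]; exact congrArg Prod.snd hfeq'

end DelCtx
end PhyloNet
namespace PhyloNet
namespace DelCtx

variable {α : Type} {N N' : PhyloNet α} {X : Finset α} {b : α}

lemma inv_inj (c : DelCtx N N') {a b : N.V} (ha1 : a ∉ c.S) (ha2 : a ∉ c.F)
    (hb1 : b ∉ c.S) (hb2 : b ∉ c.F) (h : c.inv a = c.inv b) : a = b := by
  have := congrArg c.j h
  rwa [c.j_inv ha1 ha2, c.j_inv hb1 hb2] at this

lemma triple_iff [DecidableEq α] (c : DelCtx N N') (hN : N.IsNetworkOn X) (hb : b ∈ X)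
    (hleafj : ∀ x ∈ X, x ≠ b → c.j (N'.leafMap x) = N.leafMap x)
    (hSFb : ∀ w, (w ∈ c.S ∨ w ∈ c.F) → w = N.leafMap b ∨ ¬ N.IsLeaf w) :
    ∀ x y z : α, N'.DisplaysTriple (X.erase b) x y z ↔
      (N.DisplaysTriple X x y z ∧ b ∉ ({x, y, z} : Set α)) := by
  have hleafSF : ∀ t ∈ X, t ≠ b → N.leafMap t ∉ c.S ∧ N.leafMap t ∉ c.F := by
    intro t ht htb
    constructor <;> intro hmem
    · rcases hSFb _ (Or.inl hmem) with heq | hnl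
      · exact htb (hN.leaf_inj t ht b hb heq)
      · exact hnl (hN.leaf_isLeaf t ht)
    · rcases hSFb _ (Or.inr hmem) with heq | hnl
      · exact htb (hN.leaf_inj t ht b hb heq)
      · exact hnl (hN.leaf_isLeaf t ht)
  intro x y z
  constructor
  · rintro ⟨hx, hy, hz, hxy, hxz, hyz, r, v, hpw, hsys⟩
    obtain ⟨hxb, hx⟩ := Finset.mem_erase.1 hx
    obtain ⟨hyb, hy⟩ := Finset.mem_erase.1 hy
    obtain ⟨hzb, hz⟩ := Finset.mem_erase.1 hz
    have hjx : c.j (N'.leafMap x) = N.leafMap x := hleafj x hx hxb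
    have hjy : c.j (N'.leafMap y) = N.leafMap y := hleafj y hy hyb
    have hjz : c.j (N'.leafMap z) = N.leafMap z := hleafj z hz hzb
    have hbm : b ∉ ({x, y, z} : Set α) := by
      intro hmem
      rcases hmem with rfl | rfl | rfl
      · exact hxb rfl
      · exact hyb rfl
      · exact hzb rfl
    obtain ⟨hr, hpw2⟩ := List.pairwise_cons.1 hpw
    obtain ⟨hv, hpw3⟩ := List.pairwise_cons.1 hpw2
    refine ⟨⟨hx, hy, hz, hxy, hxz, hyz, c.j r, c.j v, ?_, ?_⟩, hbm⟩
    · have : (List.map c.j [r, v, N'.leafMap x, N'.leafMap y, N'.leafMap z]).Pairwise (· ≠ ·) :=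
        hpw.map c.j (fun a b hne heq => hne (c.hinj heq))
      simpa [hjx, hjy, hjz] using this
    · have hne : ∀ e ∈ [(r, v), (v, N'.leafMap x), (v, N'.leafMap y), (r, N'.leafMap z)],
          e.1 ≠ e.2 := by
        intro e he
        simp only [List.mem_cons, List.mem_singleton, List.not_mem_nil, or_false] at he
        rcases he with rfl | rfl | rfl | rfl
        · exact hr v (by simp)
        · exact hv (N'.leafMap x) (by simp)
        · exact hv (N'.leafMap y) (by simp)
        · exact hr (N'.leafMap z) (by simp)
      have := c.pathSys_fwd _ hne hsys
      simpa [hjx, hjy, hjz] using this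
  · rintro ⟨⟨hx, hy, hz, hxy, hxz, hyz, r, v, hpw, hsys⟩, hbm⟩
    have hxb : x ≠ b := by rintro rfl; exact hbm (by simp)
    have hyb : y ≠ b := by rintro rfl; exact hbm (by simp)
    have hzb : z ≠ b := by rintro rfl; exact hbm (by simp)
    set lx := N.leafMap x with hlx
    set ly := N.leafMap y with hly
    set lz := N.leafMap z with hlz
    obtain ⟨hr, hpw2⟩ := List.pairwise_cons.1 hpw
    obtain ⟨hv, hpw3⟩ := List.pairwise_cons.1 hpw2
    obtain ⟨hlxp, hpw4⟩ := List.pairwise_cons.1 hpw3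
    obtain ⟨hlyp, _⟩ := List.pairwise_cons.1 hpw4
    obtain ⟨P, hP, hdisj⟩ := hsys
    set es : List (N.V × N.V) := [(r, v), (v, lx), (v, ly), (r, lz)] with hes
    have hmem_es : ∀ e ∈ es, (P e).Chain' N.arc ∧ (P e).head? = some e.1 ∧
        (P e).getLast? = some e.2 := hP
    -- terminal leaves are good
    have hgx := hleafSF x hx hxb
    have hgy := hleafSF y hy hyb
    have hgz := hleafSF z hz hzb
    -- propagation of F to path ends
    have hlastF : ∀ e ∈ es, ∀ w ∈ P e, w ∈ c.F → e.2 ∈ c.F := by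
      intro e he w hw hwF
      obtain ⟨hch, hh, hl⟩ := hP e he
      exact chain'_last_closed c.hFclosed hch w hw hwF e.2 hl
    have hvnotF : v ∉ c.F := by
      intro hvF
      have he2 : ((v, lx) : N.V × N.V) ∈ es := by simp [hes]
      obtain ⟨hch, hh, hl⟩ := hP _ he2
      have hvmem : v ∈ P (v, lx) := List.mem_of_mem_head? (by rw [hh]; rfl)
      exact hgx.2 (hlastF _ he2 v hvmem hvF)
    have hnoF : ∀ e ∈ es, ∀ w ∈ P e, w ∉ c.F := by
      intro e he w hw hwF
      have := hlastF e he w hw hwF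
      simp only [hes, List.mem_cons, List.mem_singleton, List.not_mem_nil, or_false] at he
      rcases he with rfl | rfl | rfl | rfl
      · exact hvnotF this
      · exact hgx.2 this
      · exact hgy.2 this
      · exact hgz.2 this
    -- endpoints not suppressed
    have hbranch : ∀ s, s ∈ c.S → ∀ e1 ∈ es, ∀ e2 ∈ es, e1 ≠ e2 → e1.1 = s → e2.1 = s →
        e1.1 ≠ e1.2 → e2.1 ≠ e2.2 → e1.2 = e2.2 := by
      intro s hs e1 he1 e2 he2 h12 h1s h2s hne1 hne2
      obtain ⟨cs, hcsS, hcsF, hcsOut⟩ := c.hSout s hs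
      obtain ⟨hch1, hh1, hl1⟩ := hP _ he1
      obtain ⟨hch2, hh2, hl2⟩ := hP _ he2
      obtain ⟨y1, hy1mem, hay1, _⟩ := second_elem hch1 (h1s ▸ hh1) hl1 (h1s ▸ hne1)
      obtain ⟨y2, hy2mem, hay2, _⟩ := second_elem hch2 (h2s ▸ hh2) hl2 (h2s ▸ hne2)
      have hy1 : y1 = cs := by
        rcases hcsOut y1 hay1 with hF | h
        · exact absurd hF (hnoF _ he1 y1 hy1mem)
        · exact h
      have hy2 : y2 = cs := by
        rcases hcsOut y2 hay2 with hF | h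
        · exact absurd hF (hnoF _ he2 y2 hy2mem)
        · exact h
      have hd := hdisj _ he1 _ he2 h12 cs (hy1 ▸ hy1mem) (hy2 ▸ hy2mem)
      have hcs_ne : cs ≠ s := (arc_ne c.hacyc (hy1 ▸ hay1)).symm
      have hcs1 : cs = e1.2 := by
        rcases hd.1 with h | h
        · exact absurd (h.trans h1s) hcs_ne
        · exact h
      have hcs2 : cs = e2.2 := by
        rcases hd.2 with h | h
        · exact absurd (h.trans h2s) hcs_ne
        · exact h
      exact hcs1.symm.trans hcs2
    have hrv : r ≠ v := hr v (by simp)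
    have hvx : v ≠ lx := hv lx (by simp)
    have hvy : v ≠ ly := hv ly (by simp)
    have hvz : v ≠ lz := hv lz (by simp)
    have hrz : r ≠ lz := hr lz (by simp)
    have hxyL : lx ≠ ly := hlxp ly (by simp)
    have hvS : v ∉ c.S := by
      intro hvS
      have h1 : ((v, lx) : N.V × N.V) ∈ es := by simp [hes]
      have h2 : ((v, ly) : N.V × N.V) ∈ es := by simp [hes]
      have h12 : ((v, lx) : N.V × N.V) ≠ (v, ly) := by
        simp only [ne_eq, Prod.mk.injEq]
        tauto
      exact hxyL (hbranch v hvS _ h1 _ h2 h12 rfl rfl hvx hvy)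
    have hrS : r ∉ c.S := by
      intro hrS
      have h1 : ((r, v) : N.V × N.V) ∈ es := by simp [hes]
      have h2 : ((r, lz) : N.V × N.V) ∈ es := by simp [hes]
      have h12 : ((r, v) : N.V × N.V) ≠ (r, lz) := by
        simp only [ne_eq, Prod.mk.injEq]
        tauto
      exact hvz (hbranch r hrS _ h1 _ h2 h12 rfl rfl hrv hrz)
    have hendS : ∀ e ∈ es, e.1 ∉ c.S ∧ e.2 ∉ c.S := by
      intro e he
      simp only [hes, List.mem_cons, List.mem_singleton, List.not_mem_nil, or_false] at he
      rcases he with rfl | rfl | rfl | rfl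
      · exact ⟨hrS, hvS⟩
      · exact ⟨hvS, hgx.1⟩
      · exact ⟨hvS, hgy.1⟩
      · exact ⟨hrS, hgz.1⟩
    have hsys' := c.pathSys_back es P hP hdisj hnoF hendS
    -- identify the mapped leaf vertices
    have hinvx : c.inv lx = N'.leafMap x := by
      rw [hlx, ← hleafj x hx hxb, c.inv_j]
    have hinvy : c.inv ly = N'.leafMap y := by
      rw [hly, ← hleafj y hy hyb, c.inv_j]
    have hinvz : c.inv lz = N'.leafMap z := by
      rw [hlz, ← hleafj z hz hzb, c.inv_j]
    -- goodness of r, v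
    have hrF : r ∉ c.F := by
      have h1 : ((r, v) : N.V × N.V) ∈ es := by simp [hes]
      obtain ⟨hch, hh, hl⟩ := hP _ h1
      exact hnoF _ h1 r (List.mem_of_mem_head? (by rw [hh]; rfl))
    refine ⟨Finset.mem_erase.2 ⟨hxb, hx⟩, Finset.mem_erase.2 ⟨hyb, hy⟩,
      Finset.mem_erase.2 ⟨hzb, hz⟩, hxy, hxz, hyz, c.inv r, c.inv v, ?_, ?_⟩
    · have hgood : ∀ t ∈ [r, v, lx, ly, lz], t ∉ c.S ∧ t ∉ c.F := by
        intro t ht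
        simp only [List.mem_cons, List.mem_singleton, List.not_mem_nil, or_false] at ht
        rcases ht with rfl | rfl | rfl | rfl | rfl
        · exact ⟨hrS, hrF⟩
        · exact ⟨hvS, hvnotF⟩
        · exact hgx
        · exact hgy
        · exact hgz
      have hpwinv : (List.map c.inv [r, v, lx, ly, lz]).Pairwise (· ≠ ·) := by
        rw [List.pairwise_map]
        refine hpw.imp_of_mem ?_
        intro a b ha hb hab heq
        exact hab (c.inv_inj (hgood a ha).1 (hgood a ha).2 (hgood b hb).1 (hgood b hb).2 heq)
      simpa [hinvx, hinvy, hinvz] using hpwinv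
    · simpa [hes, hinvx, hinvy, hinvz] using hsys'

end DelCtx
end PhyloNet
namespace PhyloNet
namespace DelCtx

variable {α : Type} {N N' : PhyloNet α} {X : Finset α} {b : α}

lemma quad_iff [DecidableEq α] (c : DelCtx N N') (hN : N.IsNetworkOn X) (hb : b ∈ X)
    (hleafj : ∀ x ∈ X, x ≠ b → c.j (N'.leafMap x) = N.leafMap x)
    (hSFb : ∀ w, (w ∈ c.S ∨ w ∈ c.F) → w = N.leafMap b ∨ ¬ N.IsLeaf w) :
    ∀ x₁ x₂ x₃ x₄ : α, N'.DisplaysQuad (X.erase b) x₁ x₂ x₃ x₄ ↔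
      (N.DisplaysQuad X x₁ x₂ x₃ x₄ ∧ b ∉ ({x₁, x₂, x₃, x₄} : Set α)) := by
  have hleafSF : ∀ t ∈ X, t ≠ b → N.leafMap t ∉ c.S ∧ N.leafMap t ∉ c.F := by
    intro t ht htb
    constructor <;> intro hmem
    · rcases hSFb _ (Or.inl hmem) with heq | hnl
      · exact htb (hN.leaf_inj t ht b hb heq)
      · exact hnl (hN.leaf_isLeaf t ht)
    · rcases hSFb _ (Or.inr hmem) with heq | hnl
      · exact htb (hN.leaf_inj t ht b hb heq)
      · exact hnl (hN.leaf_isLeaf t ht)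
  intro x₁ x₂ x₃ x₄
  constructor
  · rintro ⟨h1, h2, h3, h4, h12, h13, h14, h23, h24, h34, r, q, p, hpw, hsys⟩
    obtain ⟨h1b, h1⟩ := Finset.mem_erase.1 h1
    obtain ⟨h2b, h2⟩ := Finset.mem_erase.1 h2
    obtain ⟨h3b, h3⟩ := Finset.mem_erase.1 h3
    obtain ⟨h4b, h4⟩ := Finset.mem_erase.1 h4
    have hj1 : c.j (N'.leafMap x₁) = N.leafMap x₁ := hleafj x₁ h1 h1b
    have hj2 : c.j (N'.leafMap x₂) = N.leafMap x₂ := hleafj x₂ h2 h2b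
    have hj3 : c.j (N'.leafMap x₃) = N.leafMap x₃ := hleafj x₃ h3 h3b
    have hj4 : c.j (N'.leafMap x₄) = N.leafMap x₄ := hleafj x₄ h4 h4b
    have hbm : b ∉ ({x₁, x₂, x₃, x₄} : Set α) := by
      intro hmem
      rcases hmem with rfl | rfl | rfl | rfl
      · exact h1b rfl
      · exact h2b rfl
      · exact h3b rfl
      · exact h4b rfl
    obtain ⟨hr, hpw2⟩ := List.pairwise_cons.1 hpw
    obtain ⟨hq, hpw3⟩ := List.pairwise_cons.1 hpw2
    obtain ⟨hp, hpw4⟩ := List.pairwise_cons.1 hpw3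
    refine ⟨⟨h1, h2, h3, h4, h12, h13, h14, h23, h24, h34, c.j r, c.j q, c.j p, ?_, ?_⟩, hbm⟩
    · have : (List.map c.j [r, q, p, N'.leafMap x₁, N'.leafMap x₂, N'.leafMap x₃,
          N'.leafMap x₄]).Pairwise (· ≠ ·) :=
        hpw.map c.j (fun a b hne heq => hne (c.hinj heq))
      simpa [hj1, hj2, hj3, hj4] using this
    · have hne : ∀ e ∈ [(r, q), (q, p), (p, N'.leafMap x₁), (p, N'.leafMap x₂),
          (q, N'.leafMap x₃), (r, N'.leafMap x₄)], e.1 ≠ e.2 := by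
        intro e he
        simp only [List.mem_cons, List.mem_singleton, List.not_mem_nil, or_false] at he
        rcases he with rfl | rfl | rfl | rfl | rfl | rfl
        · exact hr q (by simp)
        · exact hq p (by simp)
        · exact hp (N'.leafMap x₁) (by simp)
        · exact hp (N'.leafMap x₂) (by simp)
        · exact hq (N'.leafMap x₃) (by simp)
        · exact hr (N'.leafMap x₄) (by simp)
      have := c.pathSys_fwd _ hne hsys
      simpa [hj1, hj2, hj3, hj4] using this
  · rintro ⟨⟨h1, h2, h3, h4, h12, h13, h14, h23, h24, h34, r, q, p, hpw, hsys⟩, hbm⟩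
    have h1b : x₁ ≠ b := by rintro rfl; exact hbm (by simp)
    have h2b : x₂ ≠ b := by rintro rfl; exact hbm (by simp)
    have h3b : x₃ ≠ b := by rintro rfl; exact hbm (by simp)
    have h4b : x₄ ≠ b := by rintro rfl; exact hbm (by simp)
    set l1 := N.leafMap x₁ with hl1
    set l2 := N.leafMap x₂ with hl2
    set l3 := N.leafMap x₃ with hl3
    set l4 := N.leafMap x₄ with hl4
    obtain ⟨hr, hpw2⟩ := List.pairwise_cons.1 hpw
    obtain ⟨hq, hpw3⟩ := List.pairwise_cons.1 hpw2
    obtain ⟨hp, hpw4⟩ := List.pairwise_cons.1 hpw3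
    obtain ⟨hL1, hpw5⟩ := List.pairwise_cons.1 hpw4
    obtain ⟨hL2, hpw6⟩ := List.pairwise_cons.1 hpw5
    obtain ⟨hL3, _⟩ := List.pairwise_cons.1 hpw6
    obtain ⟨P, hP, hdisj⟩ := hsys
    set es : List (N.V × N.V) := [(r, q), (q, p), (p, l1), (p, l2), (q, l3), (r, l4)] with hes
    have hg1 := hleafSF x₁ h1 h1b
    have hg2 := hleafSF x₂ h2 h2b
    have hg3 := hleafSF x₃ h3 h3b
    have hg4 := hleafSF x₄ h4 h4b
    have hlastF : ∀ e ∈ es, ∀ w ∈ P e, w ∈ c.F → e.2 ∈ c.F := by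
      intro e he w hw hwF
      obtain ⟨hch, hh, hl⟩ := hP e he
      exact chain'_last_closed c.hFclosed hch w hw hwF e.2 hl
    have hpnotF : p ∉ c.F := by
      intro hpF
      have he2 : ((p, l1) : N.V × N.V) ∈ es := by simp [hes]
      obtain ⟨hch, hh, hl⟩ := hP _ he2
      exact hg1.2 (hlastF _ he2 p (List.mem_of_mem_head? (by rw [hh]; rfl)) hpF)
    have hqnotF : q ∉ c.F := by
      intro hqF
      have he2 : ((q, l3) : N.V × N.V) ∈ es := by simp [hes]
      obtain ⟨hch, hh, hl⟩ := hP _ he2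
      exact hg3.2 (hlastF _ he2 q (List.mem_of_mem_head? (by rw [hh]; rfl)) hqF)
    have hnoF : ∀ e ∈ es, ∀ w ∈ P e, w ∉ c.F := by
      intro e he w hw hwF
      have := hlastF e he w hw hwF
      simp only [hes, List.mem_cons, List.mem_singleton, List.not_mem_nil, or_false] at he
      rcases he with rfl | rfl | rfl | rfl | rfl | rfl
      · exact hqnotF this
      · exact hpnotF this
      · exact hg1.2 this
      · exact hg2.2 this
      · exact hg3.2 this
      · exact hg4.2 this
    have hbranch : ∀ s, s ∈ c.S → ∀ e1 ∈ es, ∀ e2 ∈ es, e1 ≠ e2 → e1.1 = s → e2.1 = s →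
        e1.1 ≠ e1.2 → e2.1 ≠ e2.2 → e1.2 = e2.2 := by
      intro s hs e1 he1 e2 he2 hee h1s h2s hne1 hne2
      obtain ⟨cs, hcsS, hcsF, hcsOut⟩ := c.hSout s hs
      obtain ⟨hch1, hh1, hl1⟩ := hP _ he1
      obtain ⟨hch2, hh2, hl2⟩ := hP _ he2
      obtain ⟨y1, hy1mem, hay1, _⟩ := second_elem hch1 (h1s ▸ hh1) hl1 (h1s ▸ hne1)
      obtain ⟨y2, hy2mem, hay2, _⟩ := second_elem hch2 (h2s ▸ hh2) hl2 (h2s ▸ hne2)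
      have hy1 : y1 = cs := by
        rcases hcsOut y1 hay1 with hF | h
        · exact absurd hF (hnoF _ he1 y1 hy1mem)
        · exact h
      have hy2 : y2 = cs := by
        rcases hcsOut y2 hay2 with hF | h
        · exact absurd hF (hnoF _ he2 y2 hy2mem)
        · exact h
      have hd := hdisj _ he1 _ he2 hee cs (hy1 ▸ hy1mem) (hy2 ▸ hy2mem)
      have hcs_ne : cs ≠ s := (arc_ne c.hacyc (hy1 ▸ hay1)).symm
      have hcs1 : cs = e1.2 := by
        rcases hd.1 with h | h
        · exact absurd (h.trans h1s) hcs_ne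
        · exact h
      have hcs2 : cs = e2.2 := by
        rcases hd.2 with h | h
        · exact absurd (h.trans h2s) hcs_ne
        · exact h
      exact hcs1.symm.trans hcs2
    have hrq : r ≠ q := hr q (by simp)
    have hqp : q ≠ p := hq p (by simp)
    have hp1 : p ≠ l1 := hp l1 (by simp)
    have hp2 : p ≠ l2 := hp l2 (by simp)
    have hq3 : q ≠ l3 := hq l3 (by simp)
    have hr4 : r ≠ l4 := hr l4 (by simp)
    have hq4 : q ≠ l4 := hq l4 (by simp)
    have hp3 : p ≠ l3 := hp l3 (by simp)
    have h12L : l1 ≠ l2 := hL1 l2 (by simp)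
    have hpS : p ∉ c.S := by
      intro hpS
      have ha : ((p, l1) : N.V × N.V) ∈ es := by simp [hes]
      have hbb : ((p, l2) : N.V × N.V) ∈ es := by simp [hes]
      have hab : ((p, l1) : N.V × N.V) ≠ (p, l2) := by
        simp only [ne_eq, Prod.mk.injEq]
        tauto
      exact h12L (hbranch p hpS _ ha _ hbb hab rfl rfl hp1 hp2)
    have hqS : q ∉ c.S := by
      intro hqS
      have ha : ((q, p) : N.V × N.V) ∈ es := by simp [hes]
      have hbb : ((q, l3) : N.V × N.V) ∈ es := by simp [hes]
      have hab : ((q, p) : N.V × N.V) ≠ (q, l3) := by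
        simp only [ne_eq, Prod.mk.injEq]
        tauto
      exact hp3 (hbranch q hqS _ ha _ hbb hab rfl rfl hqp hq3)
    have hrS : r ∉ c.S := by
      intro hrS
      have ha : ((r, q) : N.V × N.V) ∈ es := by simp [hes]
      have hbb : ((r, l4) : N.V × N.V) ∈ es := by simp [hes]
      have hab : ((r, q) : N.V × N.V) ≠ (r, l4) := by
        simp only [ne_eq, Prod.mk.injEq]
        tauto
      exact hq4 (hbranch r hrS _ ha _ hbb hab rfl rfl hrq hr4)
    have hendS : ∀ e ∈ es, e.1 ∉ c.S ∧ e.2 ∉ c.S := by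
      intro e he
      simp only [hes, List.mem_cons, List.mem_singleton, List.not_mem_nil, or_false] at he
      rcases he with rfl | rfl | rfl | rfl | rfl | rfl
      · exact ⟨hrS, hqS⟩
      · exact ⟨hqS, hpS⟩
      · exact ⟨hpS, hg1.1⟩
      · exact ⟨hpS, hg2.1⟩
      · exact ⟨hqS, hg3.1⟩
      · exact ⟨hrS, hg4.1⟩
    have hsys' := c.pathSys_back es P hP hdisj hnoF hendS
    have hinv1 : c.inv l1 = N'.leafMap x₁ := by rw [hl1, ← hleafj x₁ h1 h1b, c.inv_j]
    have hinv2 : c.inv l2 = N'.leafMap x₂ := by rw [hl2, ← hleafj x₂ h2 h2b, c.inv_j]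
    have hinv3 : c.inv l3 = N'.leafMap x₃ := by rw [hl3, ← hleafj x₃ h3 h3b, c.inv_j]
    have hinv4 : c.inv l4 = N'.leafMap x₄ := by rw [hl4, ← hleafj x₄ h4 h4b, c.inv_j]
    have hrF : r ∉ c.F := by
      have ha : ((r, q) : N.V × N.V) ∈ es := by simp [hes]
      obtain ⟨hch, hh, hl⟩ := hP _ ha
      exact hnoF _ ha r (List.mem_of_mem_head? (by rw [hh]; rfl))
    refine ⟨Finset.mem_erase.2 ⟨h1b, h1⟩, Finset.mem_erase.2 ⟨h2b, h2⟩,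
      Finset.mem_erase.2 ⟨h3b, h3⟩, Finset.mem_erase.2 ⟨h4b, h4⟩,
      h12, h13, h14, h23, h24, h34, c.inv r, c.inv q, c.inv p, ?_, ?_⟩
    · have hgood : ∀ t ∈ [r, q, p, l1, l2, l3, l4], t ∉ c.S ∧ t ∉ c.F := by
        intro t ht
        simp only [List.mem_cons, List.mem_singleton, List.not_mem_nil, or_false] at ht
        rcases ht with rfl | rfl | rfl | rfl | rfl | rfl | rfl
        · exact ⟨hrS, hrF⟩
        · exact ⟨hqS, hqnotF⟩
        · exact ⟨hpS, hpnotF⟩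
        · exact hg1
        · exact hg2
        · exact hg3
        · exact hg4
      have hpwinv : (List.map c.inv [r, q, p, l1, l2, l3, l4]).Pairwise (· ≠ ·) := by
        rw [List.pairwise_map]
        refine hpw.imp_of_mem ?_
        intro a b ha hb hab heq
        exact hab (c.inv_inj (hgood a ha).1 (hgood a ha).2 (hgood b hb).1 (hgood b hb).2 heq)
      simpa [hinv1, hinv2, hinv3, hinv4] using hpwinv
    · simpa [hes, hinv1, hinv2, hinv3, hinv4] using hsys'

end DelCtx
end PhyloNet

open PhyloNet in
/-- The triples and quads displayed by the network obtained by
deleting `b` are exactly those displayed by `N` that do not involve `b`. -/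
theorem deleting_leaf_triples_quads {α : Type} [DecidableEq α] (X : Finset α) (N N' : PhyloNet α)
    (hN : N.IsNetworkOn X) (hnorm : N.Normal)
    (a b : α) (ha : a ∈ X) (hb : b ∈ X) (hab : a ≠ b)
    (hdel : N.DelCherry N' X a b ∨ N.DelRetCherry N' X a b) :
    (∀ x y z : α, N'.DisplaysTriple (X.erase b) x y z ↔
      (N.DisplaysTriple X x y z ∧ b ∉ ({x, y, z} : Set α))) ∧
    (∀ w x y z : α, N'.DisplaysQuad (X.erase b) w x y z ↔
      (N.DisplaysQuad X w x y z ∧ b ∉ ({w, x, y, z} : Set α))) := by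
  have hfin : Finite N.V := hN.finiteV
  have hacyc : ∀ v : N.V, ¬ Relation.TransGen N.arc v v := hN.acyclic
  have hdeg := degrees_all hN ha hb hab
  have hla0 : N.outDeg (N.leafMap a) = 0 := hN.leaf_isLeaf a ha
  have hlb0 : N.outDeg (N.leafMap b) = 0 := hN.leaf_isLeaf b hb
  have hlalb : N.leafMap a ≠ N.leafMap b := fun h => hab (hN.leaf_inj a ha b hb h)
  rcases hdel with hdel | hdel
  · -- cherry case
    obtain ⟨p, j, hpla, hplb, hinj, hleafj, hsurj, hnot, harc⟩ := hdel
    have hpout2 : N.outDeg p = 2 := by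
      have h2 := two_le_out hfin hpla hplb hlalb
      rcases hdeg p with ⟨_, h⟩ | ⟨_, h⟩ | ⟨_, h⟩ | ⟨_, h⟩ <;> omega
    have hpin1 : N.inDeg p ≤ 1 := by
      rcases hdeg p with ⟨h, h'⟩ | ⟨h, h'⟩ | ⟨h, h'⟩ | ⟨h, h'⟩ <;> omega
    have hppair := out_eq_pair hfin hpout2 hpla hplb hlalb
    have hpla_ne : p ≠ N.leafMap a := arc_ne hacyc hpla
    have hplb_ne : p ≠ N.leafMap b := arc_ne hacyc hplb
    set c : DelCtx N N' :=
      { j := j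
        S := {p}
        F := {N.leafMap b}
        dflt := N'.leafMap a
        hinj := hinj
        himg := fun v hS hF => hsurj v (by simpa using hS) (by simpa using hF)
        hnotS := fun w => by simpa using (hnot w).1
        hnotF := fun w => by simpa using (hnot w).2
        harc := fun u v => by
          rw [harc u v]
          constructor
          · rintro (h | h)
            · exact Or.inl h
            · exact Or.inr ⟨p, by simp, h⟩
          · rintro (h | ⟨s, hs, h1, h2⟩)
            · exact Or.inl h
            · simp only [Set.mem_singleton_iff] at hs
              subst hs
              exact Or.inr ⟨h1, h2⟩
        hacyc := hacyc
        hFclosed := by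
          intro f hf v hv
          simp only [Set.mem_singleton_iff] at hf
          subst hf
          exact absurd hv (not_arc_of_outDeg_zero hfin hlb0 v)
        hSout := by
          intro s hs
          simp only [Set.mem_singleton_iff] at hs
          subst hs
          refine ⟨N.leafMap a, by simpa using hpla_ne.symm, by simpa using hlalb, ?_⟩
          intro v hv
          rcases hppair v hv with h | h
          · exact Or.inr h
          · exact Or.inl (by simp [h])
        hSin := by
          intro s hs u hu
          simp only [Set.mem_singleton_iff] at hs
          rw [hs] at hu
          constructor
          · simp only [Set.mem_singleton_iff]
            exact arc_ne hacyc hu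
          · simp only [Set.mem_singleton_iff]
            intro heq
            rw [heq] at hu
            exact not_arc_of_outDeg_zero hfin hlb0 _ hu
        hUniq := by
          intro s hs u v u' v' h1 h2 h3 h4 hvS hvF hv'S hv'F
          simp only [Set.mem_singleton_iff] at hs hvF hv'F
          subst hs
          refine ⟨in_le_one hfin hpin1 h1 h3, ?_⟩
          have e1 : v = N.leafMap a := by
            rcases hppair v h2 with h | h
            · exact h
            · exact absurd h hvF
          have e2 : v' = N.leafMap a := by
            rcases hppair v' h4 with h | h
            · exact h
            · exact absurd h hv'F
          rw [e1, e2] }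
    have hleafj' : ∀ x ∈ X, x ≠ b → c.j (N'.leafMap x) = N.leafMap x := hleafj
    have hSFb : ∀ w, (w ∈ c.S ∨ w ∈ c.F) → w = N.leafMap b ∨ ¬ N.IsLeaf w := by
      intro w hw
      rcases hw with hw | hw
      · simp only [c, Set.mem_singleton_iff] at hw
        subst hw
        right
        intro hleaf
        have : N.outDeg w = 0 := hleaf
        omega
      · simp only [c, Set.mem_singleton_iff] at hw
        exact Or.inl hw
    exact ⟨c.triple_iff hN hb hleafj' hSFb, c.quad_iff hN hb hleafj' hSFb⟩
  · -- reticulated cherry case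
    obtain ⟨pa, pb, gb, j, hpala, hpblb, hret, hpapb, hgbpb, hgbpa, hinj, hleafj, hsurj,
      hnot, harc⟩ := hdel
    have hretd : N.inDeg pb = 2 := hret
    have hpbout1 : N.outDeg pb = 1 := by
      rcases hdeg pb with ⟨h, h'⟩ | ⟨h, h'⟩ | ⟨h, h'⟩ | ⟨h, h'⟩ <;> omega
    have hpbout := out_eq_single hfin hpbout1 hpblb
    have hla_pb : N.leafMap a ≠ pb := by
      intro h
      rw [← h] at hpbout1
      omega
    have hpaout2 : N.outDeg pa = 2 := by
      have h2 := two_le_out hfin hpala hpapb hla_pb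
      rcases hdeg pa with ⟨h, h'⟩ | ⟨h, h'⟩ | ⟨h, h'⟩ | ⟨h, h'⟩ <;> omega
    have hpain1 : N.inDeg pa ≤ 1 := by
      rcases hdeg pa with ⟨h, h'⟩ | ⟨h, h'⟩ | ⟨h, h'⟩ | ⟨h, h'⟩ <;> omega
    have hpapair := out_eq_pair hfin hpaout2 hpala hpapb hla_pb
    have hpapb_ne : pa ≠ pb := arc_ne hacyc hpapb
    -- gb is a tree vertex
    have hgbout2 : N.outDeg gb = 2 := by
      rcases hdeg gb with ⟨h, h'⟩ | ⟨h, h'⟩ | ⟨h, h'⟩ | ⟨h, h'⟩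
      · omega
      · exact absurd hgbpb (not_arc_of_outDeg_zero hfin h' pb)
      · omega
      · exfalso
        have hnotleaf : ¬ N.IsLeaf gb := by
          intro hleaf
          have : N.outDeg gb = 0 := hleaf
          omega
        obtain ⟨w, hw, hwret⟩ := hnorm.1 gb hnotleaf
        have : w = pb := out_eq_single hfin h' hgbpb w hw
        exact hwret (this ▸ hret)
    have hgbin1 : N.inDeg gb ≤ 1 := by
      rcases hdeg gb with ⟨h, h'⟩ | ⟨h, h'⟩ | ⟨h, h'⟩ | ⟨h, h'⟩ <;> omega
    obtain ⟨c', hc'pb, hgbc', hgbpair⟩ := out_other hfin hgbout2 hgbpb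
    have hpbgb_ne : pb ≠ gb := by
      intro h
      rw [h] at hpbout1
      omega
    -- no arc from gb to pa (normality: no shortcuts)
    have hno_gb_pa : ¬ N.arc gb pa := by
      intro hgp
      have step1 : N.arc gb pa ∧ ¬(gb = gb ∧ pa = pb) := ⟨hgp, fun h => hpapb_ne h.2⟩
      have step2 : N.arc pa pb ∧ ¬(pa = gb ∧ pb = pb) := ⟨hpapb, fun h => hgbpa h.1.symm⟩
      exact hnorm.2 gb pb ⟨hgbpb, hret,
        (Relation.TransGen.single (b := pa) step1).tail step2⟩
    have hc'pa : c' ≠ pa := fun h => hno_gb_pa (h ▸ hgbc')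
    have hlbin1 : N.inDeg (N.leafMap b) = 1 := by
      rcases hdeg (N.leafMap b) with ⟨h, h'⟩ | ⟨h, h'⟩ | ⟨h, h'⟩ | ⟨h, h'⟩ <;> omega
    have hc'lb : c' ≠ N.leafMap b := by
      intro h
      have : pb = gb := in_le_one hfin (le_of_eq hlbin1) hpblb (h ▸ hgbc')
      exact hpbgb_ne this
    have hc'gb : c' ≠ gb := (arc_ne hacyc hgbc').symm
    have hla_gb : N.leafMap a ≠ gb := by
      intro h
      rw [← h] at hgbout2
      omega
    have hla_lb := hlalb
    have hla_pa : N.leafMap a ≠ pa := (arc_ne hacyc hpala).symm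
    have hpa_lb : pa ≠ N.leafMap b := by
      intro h
      rw [h] at hpaout2
      omega
    have hgb_lb : gb ≠ N.leafMap b := by
      intro h
      rw [h] at hgbout2
      omega
    set c : DelCtx N N' :=
      { j := j
        S := {pa, gb}
        F := {pb, N.leafMap b}
        dflt := N'.leafMap a
        hinj := hinj
        himg := by
          intro v hS hF
          refine hsurj v ?_
          simp only [Set.mem_insert_iff, Set.mem_singleton_iff] at hS hF ⊢
          tauto
        hnotS := by
          intro w
          have := hnot w
          simp only [Set.mem_insert_iff, Set.mem_singleton_iff] at this ⊢
          tauto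
        hnotF := by
          intro w
          have := hnot w
          simp only [Set.mem_insert_iff, Set.mem_singleton_iff] at this ⊢
          tauto
        harc := fun u v => by
          rw [harc u v]
          constructor
          · rintro (h | h | h)
            · exact Or.inl h
            · exact Or.inr ⟨pa, by simp, h⟩
            · exact Or.inr ⟨gb, by simp, h⟩
          · rintro (h | ⟨s, hs, h1, h2⟩)
            · exact Or.inl h
            · simp only [Set.mem_insert_iff, Set.mem_singleton_iff] at hs
              rcases hs with rfl | rfl
              · exact Or.inr (Or.inl ⟨h1, h2⟩)
              · exact Or.inr (Or.inr ⟨h1, h2⟩)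
        hacyc := hacyc
        hFclosed := by
          intro f hf v hv
          simp only [Set.mem_insert_iff, Set.mem_singleton_iff] at hf ⊢
          rcases hf with rfl | rfl
          · exact Or.inr (hpbout v hv)
          · exact absurd hv (not_arc_of_outDeg_zero hfin hlb0 v)
        hSout := by
          intro s hs
          simp only [Set.mem_insert_iff, Set.mem_singleton_iff] at hs
          rcases hs with rfl | rfl
          · refine ⟨N.leafMap a, ?_, ?_, ?_⟩
            · simp only [Set.mem_insert_iff, Set.mem_singleton_iff]
              push_neg
              exact ⟨hla_pa, hla_gb⟩
            · simp only [Set.mem_insert_iff, Set.mem_singleton_iff]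
              push_neg
              exact ⟨hla_pb, hla_lb⟩
            · intro v hv
              rcases hpapair v hv with h | h
              · exact Or.inr h
              · exact Or.inl (by simp [h])
          · refine ⟨c', ?_, ?_, ?_⟩
            · simp only [Set.mem_insert_iff, Set.mem_singleton_iff]
              push_neg
              exact ⟨hc'pa, hc'gb⟩
            · simp only [Set.mem_insert_iff, Set.mem_singleton_iff]
              push_neg
              exact ⟨hc'pb, hc'lb⟩
            · intro v hv
              rcases hgbpair v hv with h | h
              · exact Or.inl (by simp [h])
              · exact Or.inr h
        hSin := by
          intro s hs u hu
          simp only [Set.mem_insert_iff, Set.mem_singleton_iff] at hs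
          rcases hs with rfl | rfl
          · constructor
            · simp only [Set.mem_insert_iff, Set.mem_singleton_iff]
              push_neg
              refine ⟨arc_ne hacyc hu, ?_⟩
              intro heq
              rw [heq] at hu
              exact hno_gb_pa hu
            · simp only [Set.mem_insert_iff, Set.mem_singleton_iff]
              push_neg
              constructor
              · intro heq
                rw [heq] at hu
                exact hpa_lb (hpbout _ hu)
              · intro heq
                rw [heq] at hu
                exact not_arc_of_outDeg_zero hfin hlb0 _ hu
          · constructor
            · simp only [Set.mem_insert_iff, Set.mem_singleton_iff]
              push_neg
              constructor
              · intro heq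
                rw [heq] at hu
                rcases hpapair _ hu with h | h
                · exact hla_gb h.symm
                · exact hpbgb_ne h.symm
              · exact arc_ne hacyc hu
            · simp only [Set.mem_insert_iff, Set.mem_singleton_iff]
              push_neg
              constructor
              · intro heq
                rw [heq] at hu
                exact hgb_lb (hpbout _ hu)
              · intro heq
                rw [heq] at hu
                exact not_arc_of_outDeg_zero hfin hlb0 _ hu
        hUniq := by
          intro s hs u v u' v' h1 h2 h3 h4 hvS hvF hv'S hv'F
          simp only [Set.mem_insert_iff, Set.mem_singleton_iff] at hs hvF hv'F
          push_neg at hvF hv'F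
          rcases hs with rfl | rfl
          · refine ⟨in_le_one hfin hpain1 h1 h3, ?_⟩
            have e1 : v = N.leafMap a := by
              rcases hpapair v h2 with h | h
              · exact h
              · exact absurd h hvF.1
            have e2 : v' = N.leafMap a := by
              rcases hpapair v' h4 with h | h
              · exact h
              · exact absurd h hv'F.1
            rw [e1, e2]
          · refine ⟨in_le_one hfin hgbin1 h1 h3, ?_⟩
            have e1 : v = c' := by
              rcases hgbpair v h2 with h | h
              · exact absurd h hvF.1
              · exact h
            have e2 : v' = c' := by
              rcases hgbpair v' h4 with h | h
              · exact absurd h hv'F.1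
              · exact h
            rw [e1, e2] }
    have hleafj' : ∀ x ∈ X, x ≠ b → c.j (N'.leafMap x) = N.leafMap x := hleafj
    have hSFb : ∀ w, (w ∈ c.S ∨ w ∈ c.F) → w = N.leafMap b ∨ ¬ N.IsLeaf w := by
      intro w hw
      have hout : ∀ u : N.V, N.outDeg u ≠ 0 → ¬ N.IsLeaf u := by
        intro u h hleaf
        exact h hleaf
      rcases hw with hw | hw <;>
        simp only [c, Set.mem_insert_iff, Set.mem_singleton_iff] at hw
      · rcases hw with rfl | rfl
        · exact Or.inr (hout w (by omega))
        · exact Or.inr (hout w (by omega))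
      · rcases hw with rfl | rfl
        · exact Or.inr (hout w (by omega))
        · exact Or.inl rfl
    exact ⟨c.triple_iff hN hb hleafj' hSFb, c.quad_iff hN hb hleafj' hSFb⟩
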